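/- Let q be an odd prime power, F = GF(q), and let δ ∈ F be a non-square. Let W be the 4-dimensional subspace of quadratic forms over F spanned by X0X1, X0X2, X1X2 and δ·X1^2+X2^2 (the web of conics associated with the line-orbit o_{8,2}). Then among the conics of W there are no double lines, exactly q^2+(3q+1)/2 pairs of real lines, exactly (q+1)/2 pairs of imaginary lines, and exactly q^3−q nonsingular conics. -/

import Mathlib

open Matrix

namespace Conics

/-- Coefficient vector (a0,...,a5) of the product of two linear forms
`(b0*X0+b1*X1+b2*X2)*(c0*X0+c1*X1+c2*X2)`, where the quadratic form with
coefficient vector `a` is `a0*X0^2 + a1*X0*X1 + a2*X0*X2 + a3*X1^2 + a4*X1*X2 + a5*X2^2`. -/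
def mulLin {F : Type} [Field F] (b c : Fin 3 → F) : Fin 6 → F :=
  ![b 0 * c 0, b 0 * c 1 + b 1 * c 0, b 0 * c 2 + b 2 * c 0,
    b 1 * c 1, b 1 * c 2 + b 2 * c 1, b 2 * c 2]

/-- The discriminant of the quadratic form with coefficient vector `a`. -/
def disc {F : Type} [Field F] (a : Fin 6 → F) : F :=
  4 * a 0 * a 3 * a 5 + a 1 * a 2 * a 4 - a 0 * a 4 ^ 2 - a 3 * a 2 ^ 2 - a 5 * a 1 ^ 2

/-- `f_a` is a double line: `f_a = c * l^2` for a nonzero scalar `c` and nonzero linear form `l`. -/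
def IsDoubleLine {F : Type} [Field F] (a : Fin 6 → F) : Prop :=
  ∃ (c : F) (l : Fin 3 → F), c ≠ 0 ∧ l ≠ 0 ∧ a = c • mulLin l l

/-- `f_a` is a pair of (distinct) real lines: `f_a = l1 * l2` with neither linear form a scalar
multiple of the other. -/
def IsRealPair {F : Type} [Field F] (a : Fin 6 → F) : Prop :=
  ∃ l1 l2 : Fin 3 → F, (¬ ∃ t : F, l2 = t • l1) ∧ (¬ ∃ t : F, l1 = t • l2) ∧ a = mulLin l1 l2

/-- `f_a` is a pair of conjugate imaginary lines: singular, but not a product of two linear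
forms over `F`. -/
def IsImagPair {F : Type} [Field F] (a : Fin 6 → F) : Prop :=
  disc a = 0 ∧ ¬ ∃ l1 l2 : Fin 3 → F, a = mulLin l1 l2

/-- `f_a` is a nonsingular conic. -/
def IsNonsingular {F : Type} [Field F] (a : Fin 6 → F) : Prop :=
  disc a ≠ 0

/-- The number of conics of a given type `T` in a linear system `W` (a subspace of the space of
quadratic forms, identified with `F^6`): the number of 1-dimensional subspaces `⟨a⟩` of `W`,
`a ≠ 0`, such that `f_a` has type `T`. -/
noncomputable def numConics {F : Type} [Field F] (W : Submodule F (Fin 6 → F))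
    (T : (Fin 6 → F) → Prop) : ℕ :=
  Set.ncard {P : Submodule F (Fin 6 → F) |
    ∃ a : Fin 6 → F, a ≠ 0 ∧ a ∈ W ∧ T a ∧ P = Submodule.span F {a}}

/-- The symmetric 3×3 matrix associated with a point `y` of `PG(5,q)`. -/
def M {F : Type} [Field F] (y : Fin 6 → F) : Matrix (Fin 3) (Fin 3) F :=
  !![y 0, y 1, y 2; y 1, y 3, y 4; y 2, y 4, y 5]

/-- The pairing `B(a,y) = a0*y0 + ... + a5*y5`. -/
def Bform {F : Type} [Field F] (a y : Fin 6 → F) : F :=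
  a 0 * y 0 + a 1 * y 1 + a 2 * y 2 + a 3 * y 3 + a 4 * y 4 + a 5 * y 5

/-- The squab of conics associated with a (nonzero) point `y`: the hyperplane
`{a : B(a,y) = 0}` of the space of quadratic forms. -/
def squab {F : Type} [Field F] (y : Fin 6 → F) : Submodule F (Fin 6 → F) where
  carrier := {a | Bform a y = 0}
  add_mem' := by
    intro a b ha hb
    simp only [Set.mem_setOf_eq, Bform, Pi.add_apply] at *
    linear_combination ha + hb
  zero_mem' := by simp [Bform]
  smul_mem' := by
    intro c a ha
    simp only [Set.mem_setOf_eq, Bform, Pi.smul_apply, smul_eq_mul] at *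
    linear_combination c * ha


/-! ### Auxiliary material -/

section Aux

variable {F : Type} [Field F]

lemma vec6_eq {α : Type*} {v w : Fin 6 → α} (h0 : v 0 = w 0) (h1 : v 1 = w 1) (h2 : v 2 = w 2)
    (h3 : v 3 = w 3) (h4 : v 4 = w 4) (h5 : v 5 = w 5) : v = w := by
  funext i; fin_cases i; exacts [h0, h1, h2, h3, h4, h5]

@[simp] lemma cv0 {α : Type*} (a b c d e f : α) : (![a,b,c,d,e,f]) 0 = a := rfl
@[simp] lemma cv1 {α : Type*} (a b c d e f : α) : (![a,b,c,d,e,f]) 1 = b := rfl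
@[simp] lemma cv2 {α : Type*} (a b c d e f : α) : (![a,b,c,d,e,f]) 2 = c := rfl
@[simp] lemma cv3 {α : Type*} (a b c d e f : α) : (![a,b,c,d,e,f]) 3 = d := rfl
@[simp] lemma cv4 {α : Type*} (a b c d e f : α) : (![a,b,c,d,e,f]) 4 = e := rfl
@[simp] lemma cv5 {α : Type*} (a b c d e f : α) : (![a,b,c,d,e,f]) 5 = f := rfl
@[simp] lemma cw0 {α : Type*} (a b c : α) : (![a,b,c]) 0 = a := rfl
@[simp] lemma cw1 {α : Type*} (a b c : α) : (![a,b,c]) 1 = b := rfl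
@[simp] lemma cw2 {α : Type*} (a b c : α) : (![a,b,c]) 2 = c := rfl

lemma mulLin_apply (l1 l2 : Fin 3 → F) : mulLin l1 l2 = ![l1 0 * l2 0, l1 0 * l2 1 + l1 1 * l2 0,
    l1 0 * l2 2 + l1 2 * l2 0, l1 1 * l2 1, l1 1 * l2 2 + l1 2 * l2 1, l1 2 * l2 2] := rfl

lemma disc_mulLin (l1 l2 : Fin 3 → F) : disc (mulLin l1 l2) = 0 := by
  simp only [disc, mulLin_apply, cv0, cv1, cv2, cv3, cv4, cv5]; ring

lemma mulLin_smul_left (t : F) (l1 l2 : Fin 3 → F) :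
    mulLin (t • l1) l2 = t • mulLin l1 l2 := by
  apply vec6_eq <;>
    simp only [mulLin_apply, Pi.smul_apply, smul_eq_mul, cv0, cv1, cv2, cv3, cv4, cv5] <;> ring

lemma mulLin_zero_left (l : Fin 3 → F) : mulLin 0 l = 0 := by
  apply vec6_eq <;> simp [mulLin_apply]

lemma mulLin_zero_right (l : Fin 3 → F) : mulLin l 0 = 0 := by
  apply vec6_eq <;> simp [mulLin_apply]

lemma disc_smul (c : F) (a : Fin 6 → F) : disc (c • a) = c ^ 3 * disc a := by
  simp only [disc, Pi.smul_apply, smul_eq_mul]; ring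

variable {δ : F} (hδ : ∀ t : F, t ^ 2 ≠ δ)

include hδ in
/-- No element of the web is a double line. -/
lemma no_double {a : Fin 6 → F} (h0 : a 0 = 0) (h3 : a 3 = δ * a 5) : ¬ IsDoubleLine a := by
  rintro ⟨c, l, hc, hl, rfl⟩
  simp only [Pi.smul_apply, smul_eq_mul, mulLin_apply, cv0, cv3, cv5] at h0 h3
  have hl0 : l 0 = 0 := by
    rcases mul_eq_zero.1 h0 with h | h
    · exact absurd h hc
    · rcases mul_eq_zero.1 h with h | h <;> exact h
  have hl2 : l 2 = 0 := by
    by_contra h2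
    have key : l 1 ^ 2 = δ * l 2 ^ 2 := by
      apply mul_left_cancel₀ hc; linear_combination h3
    exact hδ (l 1 / l 2) (by field_simp; linear_combination key)
  have hl1 : l 1 = 0 := by
    rw [hl2] at h3
    have h3' : c * (l 1 * l 1) = 0 := by linear_combination h3
    rcases mul_eq_zero.1 h3' with h | h
    · exact absurd h hc
    · rcases mul_eq_zero.1 h with h | h <;> exact h
  exact hl (by funext i; fin_cases i; exacts [hl0, hl1, hl2])

lemma fact_of_bc {b c d s : F} (hbc : ¬ (b = 0 ∧ c = 0))
    (hΔ : b * c * d - δ * s * c ^ 2 - s * b ^ 2 = 0) :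
    ∃ l1 l2 : Fin 3 → F, ![0, b, c, δ * s, d, s] = mulLin l1 l2 := by
  by_cases hb : b = 0
  · subst hb
    have hc : c ≠ 0 := fun h => hbc ⟨rfl, h⟩
    have hδs : δ * s = 0 := by
      have h2 : δ * s * c ^ 2 = 0 := by linear_combination -hΔ
      rcases mul_eq_zero.1 h2 with h | h
      · exact h
      · exact absurd h (pow_ne_zero 2 hc)
    refine ⟨![1, d / c, s / c], ![0, 0, c], ?_⟩
    apply vec6_eq <;> simp only [mulLin_apply, cv0, cv1, cv2, cv3, cv4, cv5, cw0, cw1, cw2]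
    · ring
    · ring
    · ring
    · rw [hδs]; ring
    · field_simp; ring
    · field_simp
  · refine ⟨![1, s * δ / b, (d * b - s * δ * c) / b ^ 2], ![0, b, c], ?_⟩
    apply vec6_eq <;> simp only [mulLin_apply, cv0, cv1, cv2, cv3, cv4, cv5, cw0, cw1, cw2]
    · ring
    · ring
    · ring
    · field_simp
    · field_simp; ring
    · field_simp; linear_combination -hΔ

lemma fact_d_only (d : F) (δ : F) :
    ∃ l1 l2 : Fin 3 → F, ![0, 0, 0, δ * (0:F), d, (0:F)] = mulLin l1 l2 := by
  refine ⟨![0, d, 0], ![0, 0, 1], ?_⟩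
  apply vec6_eq <;> simp [mulLin_apply]

lemma fact_sq {d s e : F} (h2 : (2:F) ≠ 0) (hs : s ≠ 0)
    (he : e ^ 2 = d ^ 2 - 4 * δ * s ^ 2) :
    ∃ l1 l2 : Fin 3 → F, ![0, 0, 0, δ * s, d, s] = mulLin l1 l2 := by
  refine ⟨![0, (d + e) / 2, s], ![0, (d - e) / (2 * s), 1], ?_⟩
  apply vec6_eq <;> simp only [mulLin_apply, cv0, cv1, cv2, cv3, cv4, cv5, cw0, cw1, cw2]
  · ring
  · ring
  · ring
  · field_simp; linear_combination he
  · field_simp; ring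
  · ring

lemma nofact {d s : F} (hs : s ≠ 0) (hnsq : ∀ e : F, e ^ 2 ≠ d ^ 2 - 4 * δ * s ^ 2) :
    ¬ ∃ l1 l2 : Fin 3 → F, ![0, 0, 0, δ * s, d, s] = mulLin l1 l2 := by
  rintro ⟨l1, l2, h⟩
  have h0 := congrFun h 0
  have h1 := congrFun h 1
  have h2 := congrFun h 2
  have h3 := congrFun h 3
  have h4 := congrFun h 4
  have h5 := congrFun h 5
  simp only [mulLin_apply, cv0, cv1, cv2, cv3, cv4, cv5] at h0 h1 h2 h3 h4 h5
  rcases mul_eq_zero.1 h0.symm with ha | ha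
  · have hb : l2 0 = 0 := by
      by_contra hb
      have : l1 2 = 0 := by
        have := h2
        rw [ha] at this
        rcases mul_eq_zero.1 (by linear_combination -this : l1 2 * l2 0 = 0) with h | h
        · exact h
        · exact absurd h hb
      exact hs (by rw [h5, this]; ring)
    exact hnsq (l1 1 * l2 2 - l1 2 * l2 1) (by
      linear_combination (-(d + l1 1 * l2 2 + l1 2 * l2 1)) * h4 + 4 * s * h3 + 4 * (l1 1 * l2 1) * h5)
  · have hb1 : l2 1 = 0 ∨ l1 0 = 0 := by
      rw [ha] at h1
      rcases mul_eq_zero.1 (by linear_combination -h1 : l1 0 * l2 1 = 0) with h | h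
      · exact Or.inr h
      · exact Or.inl h
    rcases hb1 with hb1 | hl10
    · have hb2 : l2 2 = 0 ∨ l1 0 = 0 := by
        rw [ha] at h2
        rcases mul_eq_zero.1 (by linear_combination -h2 : l1 0 * l2 2 = 0) with h | h
        · exact Or.inr h
        · exact Or.inl h
      rcases hb2 with hb2 | hl10
      · exact hs (by rw [h5, hb2]; ring)
      · exact hnsq (l1 1 * l2 2 - l1 2 * l2 1) (by
          linear_combination (-(d + l1 1 * l2 2 + l1 2 * l2 1)) * h4 + 4 * s * h3 + 4 * (l1 1 * l2 1) * h5)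
    · exact hnsq (l1 1 * l2 2 - l1 2 * l2 1) (by
        linear_combination (-(d + l1 1 * l2 2 + l1 2 * l2 1)) * h4 + 4 * s * h3 + 4 * (l1 1 * l2 1) * h5)

/-- The coefficient vector in the web determined by `x = (b,c,d,s)`. -/
def wvec (δ : F) (x : F × F × F × F) : Fin 6 → F :=
  ![0, x.1, x.2.1, δ * x.2.2.2, x.2.2.1, x.2.2.2]

/-- The discriminant as a function of the parameters. -/
def dfun (δ : F) (x : F × F × F × F) : F :=
  x.1 * x.2.1 * x.2.2.1 - δ * x.2.2.2 * x.2.1 ^ 2 - x.2.2.2 * x.1 ^ 2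

/-- The condition under which the conic is a pair of imaginary lines. -/
def imagCond (δ : F) (x : F × F × F × F) : Prop :=
  x.1 = 0 ∧ x.2.1 = 0 ∧ x.2.2.2 ≠ 0 ∧ ¬ ∃ e : F, e ^ 2 = x.2.2.1 ^ 2 - 4 * δ * x.2.2.2 ^ 2

lemma disc_wvec (δ : F) (x : F × F × F × F) : disc (wvec δ x) = dfun δ x := by
  simp only [disc, dfun, wvec, cv0, cv1, cv2, cv3, cv4, cv5]; ring

lemma dfun_zero (δ : F) : dfun δ 0 = 0 := by simp [dfun]

lemma wvec_eq_zero_iff (δ : F) (x : F × F × F × F) : wvec δ x = 0 ↔ x = 0 := by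
  constructor
  · intro h
    have h1 := congrFun h 1
    have h2 := congrFun h 2
    have h4 := congrFun h 4
    have h5 := congrFun h 5
    simp only [wvec, cv1, cv2, cv4, cv5, Pi.zero_apply] at h1 h2 h4 h5
    obtain ⟨b, c, d, s⟩ := x
    simp_all
  · rintro rfl
    apply vec6_eq <;> simp [wvec]

lemma fact_iff (h2 : (2:F) ≠ 0) (x : F × F × F × F) :
    (∃ l1 l2 : Fin 3 → F, wvec δ x = mulLin l1 l2) ↔ (dfun δ x = 0 ∧ ¬ imagCond δ x) := by
  obtain ⟨b, c, d, s⟩ := x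
  constructor
  · rintro ⟨l1, l2, h⟩
    constructor
    · rw [← disc_wvec, h]; exact disc_mulLin l1 l2
    · rintro ⟨hb, hc, hs, hnsq⟩
      simp only at hb hc hs hnsq
      subst hb; subst hc
      push_neg at hnsq
      exact nofact hs (fun e he => hnsq e he) ⟨l1, l2, by simpa [wvec] using h⟩
  · rintro ⟨hΔ, hni⟩
    simp only [dfun] at hΔ
    by_cases hbc : b = 0 ∧ c = 0
    · obtain ⟨rfl, rfl⟩ := hbc
      by_cases hs : s = 0
      · subst hs
        obtain ⟨l1, l2, h⟩ := fact_d_only d δ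
        exact ⟨l1, l2, by simpa [wvec] using h⟩
      · have hsq : ∃ e : F, e ^ 2 = d ^ 2 - 4 * δ * s ^ 2 := by
          by_contra hno
          exact hni ⟨rfl, rfl, hs, by simpa using hno⟩
        obtain ⟨e, he⟩ := hsq
        obtain ⟨l1, l2, h⟩ := fact_sq (δ := δ) h2 hs he
        exact ⟨l1, l2, by simpa [wvec] using h⟩
    · obtain ⟨l1, l2, h⟩ := fact_of_bc (δ := δ) hbc (by simpa using hΔ)
      exact ⟨l1, l2, by simpa [wvec] using h⟩

include hδ in
lemma realPair_iff (h2 : (2:F) ≠ 0) (x : F × F × F × F) (hx : x ≠ 0) :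
    IsRealPair (wvec δ x) ↔ (dfun δ x = 0 ∧ ¬ imagCond δ x) := by
  rw [← fact_iff h2 x]
  constructor
  · rintro ⟨l1, l2, _, _, h⟩; exact ⟨l1, l2, h⟩
  · rintro ⟨l1, l2, h⟩
    have hwv : wvec δ x ≠ 0 := by
      rw [Ne, wvec_eq_zero_iff]; exact hx
    have hl1 : l1 ≠ 0 := by
      rintro rfl; rw [mulLin_zero_left] at h; exact hwv h
    have hl2 : l2 ≠ 0 := by
      rintro rfl; rw [mulLin_zero_right] at h; exact hwv h
    have hnd : ¬ IsDoubleLine (wvec δ x) := by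
      apply no_double hδ <;> simp [wvec]
    refine ⟨l1, l2, ?_, ?_, h⟩
    · rintro ⟨t, rfl⟩
      have ht : t ≠ 0 := by rintro rfl; simp at hl2
      refine hnd ⟨t, l1, ht, hl1, ?_⟩
      rw [h]
      apply vec6_eq <;>
        simp only [mulLin_apply, Pi.smul_apply, smul_eq_mul, cv0, cv1, cv2, cv3, cv4, cv5] <;> ring
    · rintro ⟨t, rfl⟩
      have ht : t ≠ 0 := by rintro rfl; simp at hl1
      refine hnd ⟨t, l2, ht, hl2, ?_⟩
      rw [h]
      apply vec6_eq <;>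
        simp only [mulLin_apply, Pi.smul_apply, smul_eq_mul, cv0, cv1, cv2, cv3, cv4, cv5] <;> ring

lemma imagPair_iff (h2 : (2:F) ≠ 0) (x : F × F × F × F) :
    IsImagPair (wvec δ x) ↔ imagCond δ x := by
  unfold IsImagPair
  rw [disc_wvec, fact_iff h2 x]
  constructor
  · rintro ⟨hΔ, hn⟩
    by_contra hni
    exact hn ⟨hΔ, hni⟩
  · intro hi
    have hΔ : dfun δ x = 0 := by
      obtain ⟨hb, hc, _, _⟩ := hi
      simp only [dfun, hb, hc]; ring
    exact ⟨hΔ, fun h => h.2 hi⟩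

lemma imagCond_dfun {x : F × F × F × F} (h : imagCond δ x) : dfun δ x = 0 := by
  obtain ⟨hb, hc, _, _⟩ := h
  simp only [dfun, hb, hc]; ring

lemma imagCond_ne_zero {x : F × F × F × F} (h : imagCond δ x) : x ≠ 0 := by
  rintro rfl
  exact h.2.2.1 rfl

omit hδ in
lemma isRealPair_smul {a : Fin 6 → F} {c : F} (hc : c ≠ 0) (h : IsRealPair a) :
    IsRealPair (c • a) := by
  obtain ⟨l1, l2, hn1, hn2, rfl⟩ := h
  refine ⟨c • l1, l2, ?_, ?_, (mulLin_smul_left c l1 l2).symm⟩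
  · rintro ⟨t, ht⟩
    exact hn1 ⟨t * c, by rw [ht, smul_smul]⟩
  · rintro ⟨t, ht⟩
    refine hn2 ⟨c⁻¹ * t, ?_⟩
    rw [← smul_smul, ← ht, smul_smul, inv_mul_cancel₀ hc, one_smul]

omit hδ in
lemma isImagPair_smul {a : Fin 6 → F} {c : F} (hc : c ≠ 0) (h : IsImagPair a) :
    IsImagPair (c • a) := by
  refine ⟨by rw [disc_smul, h.1, mul_zero], ?_⟩
  rintro ⟨l1, l2, hl⟩
  exact h.2 ⟨c⁻¹ • l1, l2, by
    rw [mulLin_smul_left, ← hl, smul_smul, inv_mul_cancel₀ hc, one_smul]⟩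

omit hδ in
lemma isNonsingular_smul {a : Fin 6 → F} {c : F} (hc : c ≠ 0) (h : IsNonsingular a) :
    IsNonsingular (c • a) := by
  unfold IsNonsingular at *
  rw [disc_smul]
  exact mul_ne_zero (pow_ne_zero 3 hc) h

omit hδ in
/-- Characterization of membership in the web. -/
lemma mem_web_iff (δ : F) (a : Fin 6 → F) :
    a ∈ Submodule.span F ({![0, 1, 0, 0, 0, 0], ![0, 0, 1, 0, 0, 0],
      ![0, 0, 0, 0, 1, 0], ![0, 0, 0, δ, 0, 1]} : Set (Fin 6 → F)) ↔
    a 0 = 0 ∧ a 3 = δ * a 5 := by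
  constructor
  · intro h
    induction h using Submodule.span_induction with
    | mem x hx =>
      rcases hx with rfl | rfl | rfl | rfl <;> constructor <;> simp
    | zero => simp
    | add x y _ _ hx hy =>
      exact ⟨by simp [hx.1, hy.1], by simp [hx.2, hy.2]; ring⟩
    | smul c x _ hx =>
      exact ⟨by simp [hx.1], by simp [hx.2]; ring⟩
  · rintro ⟨h0, h3⟩
    have : a = a 1 • ![0, 1, 0, 0, 0, 0] + a 2 • ![0, 0, 1, 0, 0, 0]
        + a 4 • ![0, 0, 0, 0, 1, 0] + a 5 • ![0, 0, 0, δ, 0, 1] := by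
      apply vec6_eq <;> simp [h0, h3] <;> ring
    rw [this]
    refine Submodule.add_mem _ (Submodule.add_mem _ (Submodule.add_mem _ ?_ ?_) ?_) ?_ <;>
      exact Submodule.smul_mem _ _ (Submodule.subset_span (by simp))

variable [Fintype F]

omit hδ in
/-- Counting projective points of an invariant family as scaling classes. -/
lemma proj_count (S : Set (Fin 6 → F)) (h0 : ∀ a ∈ S, a ≠ 0)
    (hsmul : ∀ a ∈ S, ∀ c : F, c ≠ 0 → c • a ∈ S) :
    Set.ncard {P : Submodule F (Fin 6 → F) | ∃ a, a ∈ S ∧ P = Submodule.span F {a}}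
      * (Fintype.card F - 1) = S.ncard := by
  classical
  have hfin : S.Finite := Set.toFinite S
  set s : Finset (Fin 6 → F) := hfin.toFinset with hs
  have hmem : ∀ a, a ∈ s ↔ a ∈ S := fun a => hfin.mem_toFinset
  set t : Finset (Submodule F (Fin 6 → F)) := s.image (fun a => Submodule.span F {a}) with ht
  have hset : {P : Submodule F (Fin 6 → F) | ∃ a, a ∈ S ∧ P = Submodule.span F {a}} = ↑t := by
    ext P
    simp only [Set.mem_setOf_eq, ht, Finset.coe_image, Set.mem_image, Finset.mem_coe]
    constructor
    · rintro ⟨a, haS, rfl⟩; exact ⟨a, (hmem a).2 haS, rfl⟩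
    · rintro ⟨a, has, rfl⟩; exact ⟨a, (hmem a).1 has, rfl⟩
  rw [hset, Set.ncard_coe_finset, Set.ncard_eq_toFinset_card S hfin, ← hs]
  have hfib : s.card = ∑ P ∈ t, (s.filter (fun a => Submodule.span F {a} = P)).card :=
    Finset.card_eq_sum_card_fiberwise (fun a ha => Finset.mem_image_of_mem _ ha)
  have hcard : ∀ P ∈ t, (s.filter (fun a => Submodule.span F {a} = P)).card
      = Fintype.card F - 1 := by
    intro P hP
    obtain ⟨a₀, ha₀s, ha₀⟩ := Finset.mem_image.1 hP
    have ha₀S : a₀ ∈ S := (hmem a₀).1 ha₀s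
    have ha₀0 : a₀ ≠ 0 := h0 a₀ ha₀S
    have himg : s.filter (fun a => Submodule.span F {a} = P)
        = (Finset.univ.erase (0 : F)).image (fun c => c • a₀) := by
      ext a
      simp only [Finset.mem_filter, Finset.mem_image, Finset.mem_erase, Finset.mem_univ,
        and_true, hmem]
      constructor
      · rintro ⟨haS, hspan⟩
        have hmemspan : a ∈ Submodule.span F {a₀} := by
          rw [ha₀, ← hspan]
          exact Submodule.mem_span_singleton_self a
        obtain ⟨c, hc⟩ := Submodule.mem_span_singleton.1 hmemspan
        refine ⟨c, ?_, hc⟩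
        rintro rfl
        rw [zero_smul] at hc
        exact h0 a haS hc.symm
      · rintro ⟨c, hc, rfl⟩
        refine ⟨hsmul a₀ ha₀S c hc, ?_⟩
        rw [← ha₀]
        exact Submodule.span_singleton_smul_eq (isUnit_iff_ne_zero.2 hc) a₀
    rw [himg, Finset.card_image_of_injOn, Finset.card_erase_of_mem (Finset.mem_univ _),
      Finset.card_univ]
    intro c _ c' _ hcc
    obtain ⟨i, hi⟩ := Function.ne_iff.1 ha₀0
    have := congrFun hcc i
    simp only [Pi.smul_apply, smul_eq_mul] at this
    simpa using mul_right_cancel₀ (by simpa using hi) this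
  rw [hfib, Finset.sum_congr rfl hcard, Finset.sum_const, smul_eq_mul]

end Aux

section Count

open Finset

attribute [local instance] Classical.propDecidable

variable {F : Type} [Field F] [Fintype F]
variable {δ : F} (hδ : ∀ t : F, t ^ 2 ≠ δ) (h2 : (2:F) ≠ 0)

omit [Fintype F] in
include hδ in
lemma delta_ne_zero : δ ≠ 0 := fun h => hδ 0 (by simp [h])

include hδ in
/-- counting pairs (d,s) in a fiber over (b,c) ≠ (0,0). -/
lemma count_fiber_bc {b c : F} (hbc : ¬ (b = 0 ∧ c = 0)) :
    (univ.filter fun p : F × F => (b ^ 2 + δ * c ^ 2) * p.2 = b * c * p.1).card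
      = Fintype.card F := by
  by_cases hA : b ^ 2 + δ * c ^ 2 = 0
  · have hc : c ≠ 0 := by
      rintro rfl
      simp only [mul_zero, pow_two, zero_mul, add_zero] at hA
      exact hbc ⟨by rcases mul_eq_zero.1 (by linear_combination hA : b * b = 0) with h | h <;>
        exact h, rfl⟩
    have hb : b ≠ 0 := by
      rintro rfl
      have : δ * c ^ 2 = 0 := by linear_combination hA
      rcases mul_eq_zero.1 this with h | h
      · exact delta_ne_zero hδ h
      · exact hc (pow_eq_zero_iff (two_ne_zero) |>.1 h)
    have : (univ.filter fun p : F × F => (b ^ 2 + δ * c ^ 2) * p.2 = b * c * p.1)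
        = univ.image (fun s : F => ((0 : F), s)) := by
      ext p
      simp only [mem_filter, mem_univ, true_and, mem_image, hA, zero_mul]
      constructor
      · intro h
        refine ⟨p.2, ?_⟩
        have hp1 : p.1 = 0 := by
          rcases mul_eq_zero.1 h.symm with h' | h'
          · rcases mul_eq_zero.1 h' with h'' | h''
            · exact absurd h'' hb
            · exact absurd h'' hc
          · exact h'
        exact Prod.ext (by simp [hp1]) rfl
      · rintro ⟨s, rfl⟩; simp
    rw [this, Finset.card_image_of_injective _ (fun x y h => by simpa using h),
      Finset.card_univ]
  · have : (univ.filter fun p : F × F => (b ^ 2 + δ * c ^ 2) * p.2 = b * c * p.1)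
        = univ.image (fun d : F => (d, (b ^ 2 + δ * c ^ 2)⁻¹ * (b * c * d))) := by
      ext p
      simp only [mem_filter, mem_univ, true_and, mem_image]
      constructor
      · intro h
        refine ⟨p.1, Prod.ext rfl ?_⟩
        simp only
        rw [← h, inv_mul_cancel_left₀ hA]
      · rintro ⟨d, rfl⟩
        simp [mul_inv_cancel_left₀ hA]
    rw [this, Finset.card_image_of_injective _ (fun x y h => by simpa using congrArg Prod.fst h),
      Finset.card_univ]

include hδ in
lemma count_sing :
    (univ.filter fun x : F × F × F × F => dfun δ x = 0).card
      = Fintype.card F ^ 2 + (Fintype.card F ^ 2 - 1) * Fintype.card F := by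
  rw [Finset.card_eq_sum_card_fiberwise
    (f := fun x : F × F × F × F => (x.1, x.2.1)) (t := univ) (fun x _ => mem_univ _)]
  have hfib : ∀ p : F × F, ((univ.filter fun x : F × F × F × F => dfun δ x = 0).filter
      (fun x => (x.1, x.2.1) = p)).card =
      if p = (0, 0) then Fintype.card F ^ 2 else Fintype.card F := by
    rintro ⟨b, c⟩
    rw [Finset.filter_filter]
    have hbij : ((univ : Finset (F × F × F × F)).filter
        fun x => dfun δ x = 0 ∧ (x.1, x.2.1) = (b, c)).card
        = (univ.filter fun p : F × F => (b ^ 2 + δ * c ^ 2) * p.2 = b * c * p.1).card := by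
      refine Finset.card_nbij' (i := fun x => (x.2.2.1, x.2.2.2))
        (j := fun p => (b, c, p.1, p.2)) ?_ ?_ ?_ ?_
      · rintro ⟨b', c', d, s⟩ hx
        simp only [Finset.mem_coe, mem_filter, mem_univ, true_and, Prod.mk.injEq] at hx ⊢
        obtain ⟨hΔ, rfl, rfl⟩ := hx
        simp only [dfun] at hΔ
        linear_combination -hΔ
      · rintro ⟨d, s⟩ hp
        simp only [Finset.mem_coe, mem_filter, mem_univ, true_and] at hp ⊢
        simp only [dfun]
        exact ⟨by linear_combination -hp, trivial⟩
      · rintro ⟨b', c', d, s⟩ hx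
        simp only [Finset.mem_coe, mem_filter, mem_univ, true_and, Prod.mk.injEq] at hx
        obtain ⟨_, rfl, rfl⟩ := hx
        rfl
      · rintro ⟨d, s⟩ _
        rfl
    rw [hbij]
    by_cases hp : (b, c) = ((0 : F), (0 : F))
    · rw [if_pos hp]
      rw [Prod.mk.injEq] at hp
      obtain ⟨rfl, rfl⟩ := hp
      have : (univ.filter fun p : F × F =>
          ((0:F) ^ 2 + δ * (0:F) ^ 2) * p.2 = (0:F) * (0:F) * p.1) = univ := by
        apply Finset.filter_true_of_mem
        intro p _
        ring
      rw [this, Finset.card_univ, Fintype.card_prod, ← pow_two]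
    · rw [if_neg hp]
      apply count_fiber_bc hδ
      rintro ⟨rfl, rfl⟩
      exact hp rfl
  rw [Finset.sum_congr rfl (fun p _ => hfib p)]
  rw [← Finset.add_sum_erase _ _ (mem_univ ((0 : F), (0 : F))), if_pos rfl]
  have : ∀ p ∈ (univ : Finset (F × F)).erase ((0 : F), (0 : F)),
      (if p = ((0 : F), (0 : F)) then Fintype.card F ^ 2 else Fintype.card F)
        = Fintype.card F := fun p hp => if_neg (Finset.mem_erase.1 hp).1
  rw [Finset.sum_congr rfl this, Finset.sum_const,
    Finset.card_erase_of_mem (mem_univ _), Finset.card_univ, Fintype.card_prod, smul_eq_mul,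
    ← pow_two]

include hδ h2 in
lemma count_E :
    (univ.filter fun p : F × F => p.2 ^ 2 = p.1 ^ 2 - 4 * δ).card = Fintype.card F - 1 := by
  have h4 : (4 : F) ≠ 0 := by
    intro h
    exact mul_ne_zero h2 h2 (by linear_combination h)
  have h4δ : 4 * δ ≠ 0 := mul_ne_zero h4 (delta_ne_zero hδ)
  have : (univ.erase (0 : F)).card = Fintype.card F - 1 := by
    rw [Finset.card_erase_of_mem (mem_univ _), Finset.card_univ]
  rw [← this]
  refine Finset.card_nbij' (i := fun p => p.1 + p.2)
    (j := fun u => ((u + 4 * δ * u⁻¹) / 2, (u - 4 * δ * u⁻¹) / 2)) ?_ ?_ ?_ ?_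
  · rintro ⟨d, e⟩ hp
    simp only [Finset.mem_coe, mem_filter, mem_univ, true_and] at hp
    simp only [Finset.mem_coe, Finset.mem_erase, mem_univ, and_true]
    intro h
    apply h4δ
    linear_combination (d - e) * h + hp
  · intro u hu
    simp only [Finset.mem_coe, Finset.mem_erase, mem_univ, and_true] at hu
    simp only [Finset.mem_coe, mem_filter, mem_univ, true_and]
    field_simp
    ring
  · rintro ⟨d, e⟩ hp
    simp only [Finset.mem_coe, mem_filter, mem_univ, true_and] at hp
    have hde : d + e ≠ 0 := by
      intro h
      apply h4δ
      linear_combination (d - e) * h + hp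
    simp only [Prod.mk.injEq]
    constructor
    · field_simp
      linear_combination hp
    · field_simp
      linear_combination -hp
  · intro u hu
    simp only [Finset.mem_coe, Finset.mem_erase, mem_univ, and_true] at hu
    field_simp
    ring

include hδ h2 in
lemma count_sq :
    2 * (univ.filter fun d : F => ∃ e : F, e ^ 2 = d ^ 2 - 4 * δ).card
      = Fintype.card F - 1 := by
  rw [← count_E hδ h2]
  rw [Finset.card_eq_sum_card_fiberwise (f := fun p : F × F => p.1)
    (t := univ.filter fun d : F => ∃ e : F, e ^ 2 = d ^ 2 - 4 * δ)
    (fun p hp => by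
      simp only [Finset.mem_coe, mem_filter, mem_univ, true_and] at hp ⊢
      exact ⟨p.2, hp⟩)]
  rw [Finset.sum_congr rfl (fun d hd => ?_), Finset.sum_const, smul_eq_mul, mul_comm]
  simp only [mem_filter, mem_univ, true_and] at hd
  obtain ⟨e₀, he₀⟩ := hd
  have he₀0 : e₀ ≠ 0 := by
    intro h
    rw [h] at he₀
    refine hδ (d / 2) ?_
    field_simp
    linear_combination -he₀
  have hne : e₀ ≠ -e₀ := by
    intro h
    apply he₀0
    have : (2 : F) * e₀ = 0 := by linear_combination h
    rcases mul_eq_zero.1 this with h' | h'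
    · exact absurd h' h2
    · exact h'
  have : ((univ.filter fun p : F × F => p.2 ^ 2 = p.1 ^ 2 - 4 * δ).filter
      fun p => p.1 = d) = {(d, e₀), (d, -e₀)} := by
    ext ⟨d', e⟩
    simp only [Finset.mem_filter, mem_univ, true_and, Finset.mem_insert,
      Finset.mem_singleton, Prod.mk.injEq]
    constructor
    · rintro ⟨he, rfl⟩
      have : (e - e₀) * (e + e₀) = 0 := by linear_combination he - he₀
      rcases mul_eq_zero.1 this with h' | h'
      · exact Or.inl ⟨rfl, by linear_combination h'⟩
      · exact Or.inr ⟨rfl, by linear_combination h'⟩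
    · rintro (⟨rfl, rfl⟩ | ⟨rfl, rfl⟩)
      · exact ⟨he₀, rfl⟩
      · exact ⟨by linear_combination he₀, rfl⟩
  rw [this, Finset.card_insert_of_notMem (by simp [hne]), Finset.card_singleton]

lemma count_sq_scaled {s : F} (hs : s ≠ 0) :
    (univ.filter fun d : F => ∃ e : F, e ^ 2 = d ^ 2 - 4 * δ * s ^ 2).card
      = (univ.filter fun d : F => ∃ e : F, e ^ 2 = d ^ 2 - 4 * δ).card := by
  refine Finset.card_nbij' (i := fun d => s⁻¹ * d) (j := fun d => s * d) ?_ ?_ ?_ ?_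
  · intro d hd
    simp only [Finset.mem_coe, mem_filter, mem_univ, true_and] at hd ⊢
    obtain ⟨e, he⟩ := hd
    refine ⟨s⁻¹ * e, ?_⟩
    field_simp
    linear_combination he
  · intro d hd
    simp only [Finset.mem_coe, mem_filter, mem_univ, true_and] at hd ⊢
    obtain ⟨e, he⟩ := hd
    exact ⟨s * e, by linear_combination s ^ 2 * he⟩
  · intro d _
    field_simp
  · intro d _
    field_simp

omit hδ h2 in
lemma count_imag :
    (univ.filter fun x : F × F × F × F => imagCond δ x).card
      = (Fintype.card F - 1) *
        (Fintype.card F - (univ.filter fun d : F => ∃ e : F, e ^ 2 = d ^ 2 - 4 * δ).card) := by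
  rw [Finset.card_eq_sum_card_fiberwise (f := fun x : F × F × F × F => x.2.2.2)
    (t := univ.erase (0 : F))
    (fun x hx => by
      simp only [Finset.mem_coe, mem_filter, mem_univ, true_and] at hx
      simp only [Finset.mem_coe, Finset.mem_erase, mem_univ, and_true]
      exact hx.2.2.1)]
  rw [Finset.sum_congr rfl (fun s hs => ?_), Finset.sum_const, smul_eq_mul,
    Finset.card_erase_of_mem (mem_univ _), Finset.card_univ]
  simp only [Finset.mem_erase, mem_univ, and_true] at hs
  have hbij : ((univ.filter fun x : F × F × F × F => imagCond δ x).filter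
      fun x => x.2.2.2 = s).card
      = (univ.filter fun d : F => ¬ ∃ e : F, e ^ 2 = d ^ 2 - 4 * δ * s ^ 2).card := by
    refine Finset.card_nbij' (i := fun x => x.2.2.1) (j := fun d => (0, 0, d, s)) ?_ ?_ ?_ ?_
    · rintro ⟨b, c, d, s'⟩ hx
      simp only [Finset.mem_coe, Finset.mem_filter, mem_univ, true_and] at hx ⊢
      simp only [imagCond] at hx ⊢
      obtain ⟨⟨_, _, _, hnsq⟩, rfl⟩ := hx
      exact hnsq
    · intro d hd
      simp only [Finset.mem_coe, Finset.mem_filter, mem_univ, true_and] at hd ⊢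
      simp only [imagCond] at hd ⊢
      exact ⟨⟨by simp, by simp, hs, hd⟩, by simp⟩
    · rintro ⟨b, c, d, s'⟩ hx
      simp only [Finset.mem_coe, Finset.mem_filter, mem_univ, true_and] at hx
      simp only [imagCond] at hx
      obtain ⟨⟨rfl, rfl, _, _⟩, rfl⟩ := hx
      rfl
    · intro d _
      rfl
  rw [hbij]
  have := Finset.card_filter_add_card_filter_not
    (s := (univ : Finset F)) (p := fun d : F => ∃ e : F, e ^ 2 = d ^ 2 - 4 * δ * s ^ 2)
  rw [Finset.card_univ] at this
  rw [count_sq_scaled hs] at this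
  omega

end Count

/-- conic counts of the web `(X0X1, X0X2, X1X2, δX1^2 + X2^2)` with `δ` a
non-square (line-orbit `o_{8,2}`), `q` odd. -/
theorem web_o82_conic_counts (F : Type) [Field F] [Fintype F] (q : ℕ)
    (hq : Fintype.card F = q) (hodd : Odd q) (δ : F) (hδ : ∀ t : F, t ^ 2 ≠ δ)
    (W : Submodule F (Fin 6 → F))
    (hW : W = Submodule.span F ({![0, 1, 0, 0, 0, 0], ![0, 0, 1, 0, 0, 0],
      ![0, 0, 0, 0, 1, 0], ![0, 0, 0, δ, 0, 1]} : Set (Fin 6 → F))) :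
    numConics W IsDoubleLine = 0 ∧
    numConics W IsRealPair = q ^ 2 + (3 * q + 1) / 2 ∧
    numConics W IsImagPair = (q + 1) / 2 ∧
    numConics W IsNonsingular = q ^ 3 - q := by
  classical
  subst hW
  obtain ⟨k, hk⟩ := hodd
  have hq1 : 1 < q := by rw [← hq]; exact Fintype.one_lt_card
  have hkpos : 1 ≤ k := by omega
  have h2 : (2 : F) ≠ 0 := by
    intro h
    have hinj : Function.Injective (fun x : F => x ^ 2) := by
      intro x y hxy
      simp only at hxy
      have hz : (x - y) * (x + y) = 0 := by linear_combination hxy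
      rcases mul_eq_zero.1 hz with h' | h'
      · exact sub_eq_zero.1 h'
      · have hxy' : x = -y := eq_neg_of_add_eq_zero_left h'
        have hyy : -y = y := by linear_combination -y * h
        rw [hxy', hyy]
    obtain ⟨t, ht⟩ := (Finite.injective_iff_surjective.1 hinj) δ
    exact hδ t ht
  -- the generic counting principle
  have key : ∀ T : (Fin 6 → F) → Prop,
      (∀ (a : Fin 6 → F) (c : F), c ≠ 0 → T a → T (c • a)) →
      numConics (Submodule.span F ({![0, 1, 0, 0, 0, 0], ![0, 0, 1, 0, 0, 0],
        ![0, 0, 0, 0, 1, 0], ![0, 0, 0, δ, 0, 1]} : Set (Fin 6 → F))) T * (q - 1)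
        = (Finset.univ.filter fun x : F × F × F × F => x ≠ 0 ∧ T (wvec δ x)).card := by
    intro T hT
    set Wb := Submodule.span F ({![0, 1, 0, 0, 0, 0], ![0, 0, 1, 0, 0, 0],
        ![0, 0, 0, 0, 1, 0], ![0, 0, 0, δ, 0, 1]} : Set (Fin 6 → F)) with hWb
    set S : Set (Fin 6 → F) := {a | a ≠ 0 ∧ a ∈ Wb ∧ T a} with hSdef
    have h0 : ∀ a ∈ S, a ≠ 0 := fun a ha => ha.1
    have hsmul : ∀ a ∈ S, ∀ c : F, c ≠ 0 → c • a ∈ S := by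
      rintro a ⟨ha0, haW, haT⟩ c hc
      exact ⟨smul_ne_zero hc ha0, Submodule.smul_mem _ _ haW, hT a c hc haT⟩
    have hset : {P : Submodule F (Fin 6 → F) |
        ∃ a : Fin 6 → F, a ≠ 0 ∧ a ∈ Wb ∧ T a ∧ P = Submodule.span F {a}}
        = {P : Submodule F (Fin 6 → F) | ∃ a, a ∈ S ∧ P = Submodule.span F {a}} := by
      ext P
      constructor
      · rintro ⟨a, h1, hh2, h3, h4⟩; exact ⟨a, ⟨h1, hh2, h3⟩, h4⟩
      · rintro ⟨a, ⟨h1, hh2, h3⟩, h4⟩; exact ⟨a, h1, hh2, h3, h4⟩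
    have himg : S = wvec δ '' {x : F × F × F × F | x ≠ 0 ∧ T (wvec δ x)} := by
      ext a
      constructor
      · rintro ⟨ha0, haW, haT⟩
        obtain ⟨h0', h3'⟩ := (mem_web_iff δ a).1 (hWb ▸ haW)
        have he : wvec δ (a 1, a 2, a 4, a 5) = a := by
          apply vec6_eq <;> simp [wvec, h0', h3']
        refine ⟨(a 1, a 2, a 4, a 5), ⟨?_, ?_⟩, he⟩
        · intro hx0
          rw [hx0] at he
          exact ha0 (he.symm.trans ((wvec_eq_zero_iff δ 0).2 rfl))
        · rw [he]; exact haT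
      · rintro ⟨x, ⟨hx0, hxT⟩, rfl⟩
        refine ⟨fun h => hx0 ((wvec_eq_zero_iff δ x).1 h), ?_, hxT⟩
        rw [hWb, mem_web_iff]
        constructor <;> simp [wvec]
    have hinj : Function.Injective (wvec δ : F × F × F × F → Fin 6 → F) := by
      intro x y hxy
      have e1 := congrFun hxy 1
      have e2 := congrFun hxy 2
      have e4 := congrFun hxy 4
      have e5 := congrFun hxy 5
      simp only [wvec, cv1, cv2, cv4, cv5] at e1 e2 e4 e5
      obtain ⟨x1, x2, x3, x4⟩ := x
      obtain ⟨y1, y2, y3, y4⟩ := y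
      simp_all
    have hfs : {x : F × F × F × F | x ≠ 0 ∧ T (wvec δ x)}
        = ↑(Finset.univ.filter fun x : F × F × F × F => x ≠ 0 ∧ T (wvec δ x)) := by
      ext x; simp
    rw [numConics, hset, ← hq, proj_count S h0 hsmul, himg,
      Set.ncard_image_of_injective _ hinj, hfs, Set.ncard_coe_finset]
  -- abbreviations for the three finsets
  set R : Finset (F × F × F × F) :=
    Finset.univ.filter fun x => x ≠ 0 ∧ IsRealPair (wvec δ x) with hR
  set I : Finset (F × F × F × F) :=
    Finset.univ.filter fun x => x ≠ 0 ∧ IsImagPair (wvec δ x) with hI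
  set NS : Finset (F × F × F × F) :=
    Finset.univ.filter fun x => x ≠ 0 ∧ IsNonsingular (wvec δ x) with hNS
  set Sg : Finset (F × F × F × F) :=
    Finset.univ.filter fun x => dfun δ x = 0 with hSg
  -- the singular conics split into 0, real pairs, imaginary pairs
  have hsplit : Sg = insert 0 (R ∪ I) := by
    ext x
    simp only [hSg, hR, hI, Finset.mem_insert, Finset.mem_union, Finset.mem_filter,
      Finset.mem_univ, true_and]
    constructor
    · intro hΔ
      by_cases hx0 : x = 0
      · exact Or.inl hx0
      refine Or.inr ?_
      by_cases hic : imagCond δ x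
      · exact Or.inr ⟨hx0, (imagPair_iff h2 x).2 hic⟩
      · exact Or.inl ⟨hx0, (realPair_iff hδ h2 x hx0).2 ⟨hΔ, hic⟩⟩
    · rintro (rfl | ⟨hx0, hre⟩ | ⟨hx0, him⟩)
      · exact dfun_zero δ
      · exact ((realPair_iff hδ h2 x hx0).1 hre).1
      · exact imagCond_dfun ((imagPair_iff h2 x).1 him)
  have hdisj : Disjoint R I := by
    rw [Finset.disjoint_left]
    rintro x hxR hxI
    simp only [hR, hI, Finset.mem_filter, Finset.mem_univ, true_and] at hxR hxI
    exact ((realPair_iff hδ h2 x hxR.1).1 hxR.2).2 ((imagPair_iff h2 x).1 hxI.2)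
  have h0notin : (0 : F × F × F × F) ∉ R ∪ I := by
    simp only [hR, hI, Finset.mem_union, Finset.mem_filter, Finset.mem_univ, true_and]
    rintro (⟨h, _⟩ | ⟨h, _⟩) <;> exact h rfl
  have hSgcard : Sg.card = 1 + (R.card + I.card) := by
    rw [hsplit, Finset.card_insert_of_notMem h0notin, Finset.card_union_of_disjoint hdisj]
    omega
  -- numeric values
  have hSgval : Sg.card = 8 * k ^ 3 + 16 * k ^ 2 + 8 * k + 1 := by
    rw [hSg, count_sing hδ, hq, hk]
    have e2 : (2 * k + 1) ^ 2 = 4 * k ^ 2 + 4 * k + 1 := by ring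
    rw [e2]
    have e2' : 4 * k ^ 2 + 4 * k + 1 - 1 = 4 * k ^ 2 + 4 * k := by omega
    rw [e2']
    ring
  -- the imaginary count
  have hIval : I.card = 2 * k ^ 2 + 2 * k := by
    have hIC : I = Finset.univ.filter fun x : F × F × F × F => imagCond δ x := by
      ext x
      simp only [hI, Finset.mem_filter, Finset.mem_univ, true_and]
      constructor
      · rintro ⟨hx0, hxI⟩
        exact (imagPair_iff h2 x).1 hxI
      · intro h
        exact ⟨imagCond_ne_zero h, (imagPair_iff h2 x).2 h⟩
    set N : ℕ := (Finset.univ.filter fun d : F => ∃ e : F, e ^ 2 = d ^ 2 - 4 * δ).card with hN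
    have hN2 : 2 * N = q - 1 := by rw [hN, ← hq]; exact count_sq hδ h2
    have hNk : N = k := by omega
    rw [hIC, count_imag, hq, ← hN, hNk]
    have e1 : q - 1 = 2 * k := by omega
    have e2 : q - k = k + 1 := by omega
    rw [e1, e2]
    ring
  have hRval : R.card = 8 * k ^ 3 + 14 * k ^ 2 + 6 * k := by omega
  -- nonsingular count
  have hNSval : NS.card = 16 * k ^ 4 + 24 * k ^ 3 + 8 * k ^ 2 := by
    have hNSeq : NS = Finset.univ.filter fun x : F × F × F × F => ¬ dfun δ x = 0 := by
      ext x
      simp only [hNS, Finset.mem_filter, Finset.mem_univ, true_and, IsNonsingular, disc_wvec]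
      constructor
      · rintro ⟨_, h⟩; exact h
      · intro h
        refine ⟨?_, h⟩
        rintro rfl
        exact h (dfun_zero δ)
    have hpart := Finset.card_filter_add_card_filter_not
      (s := (Finset.univ : Finset (F × F × F × F))) (p := fun x => dfun δ x = 0)
    rw [Finset.card_univ] at hpart
    have hcard4 : Fintype.card (F × F × F × F) = q ^ 4 := by
      simp only [Fintype.card_prod, hq]; ring
    rw [hcard4] at hpart
    have hq4 : q ^ 4 = 16 * k ^ 4 + 32 * k ^ 3 + 24 * k ^ 2 + 8 * k + 1 := by rw [hk]; ring
    rw [hNSeq]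
    have : (Finset.univ.filter fun x : F × F × F × F => dfun δ x = 0).card
        = 8 * k ^ 3 + 16 * k ^ 2 + 8 * k + 1 := by rw [← hSg]; exact hSgval
    omega
  have hq1' : q - 1 = 2 * k := by omega
  refine ⟨?_, ?_, ?_, ?_⟩
  · -- no double lines
    have hempty : {P : Submodule F (Fin 6 → F) |
        ∃ a : Fin 6 → F, a ≠ 0 ∧ a ∈ Submodule.span F ({![0, 1, 0, 0, 0, 0], ![0, 0, 1, 0, 0, 0],
          ![0, 0, 0, 0, 1, 0], ![0, 0, 0, δ, 0, 1]} : Set (Fin 6 → F)) ∧ IsDoubleLine a ∧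
          P = Submodule.span F {a}} = ∅ := by
      ext P
      simp only [Set.mem_setOf_eq, Set.mem_empty_iff_false, iff_false]
      rintro ⟨a, ha0, haW, haD, _⟩
      obtain ⟨h0', h3'⟩ := (mem_web_iff δ a).1 haW
      exact no_double hδ h0' h3' haD
    rw [numConics, hempty, Set.ncard_empty]
  · -- real pairs
    have hkey := key IsRealPair (fun a c hc h => isRealPair_smul hc h)
    rw [← hR, hRval, hq1'] at hkey
    have htar : (q ^ 2 + (3 * q + 1) / 2) * (2 * k) = 8 * k ^ 3 + 14 * k ^ 2 + 6 * k := by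
      have e1 : q ^ 2 = 4 * k ^ 2 + 4 * k + 1 := by rw [hk]; ring
      have e2 : (3 * q + 1) / 2 = 3 * k + 2 := by omega
      rw [e1, e2]
      ring
    exact Nat.eq_of_mul_eq_mul_right (by omega : 0 < 2 * k) (hkey.trans htar.symm)
  · -- imaginary pairs
    have hkey := key IsImagPair (fun a c hc h => isImagPair_smul hc h)
    rw [← hI, hIval, hq1'] at hkey
    have htar : (q + 1) / 2 * (2 * k) = 2 * k ^ 2 + 2 * k := by
      have e2 : (q + 1) / 2 = k + 1 := by omega
      rw [e2]
      ring
    exact Nat.eq_of_mul_eq_mul_right (by omega : 0 < 2 * k) (hkey.trans htar.symm)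
  · -- nonsingular conics
    have hkey := key IsNonsingular (fun a c hc h => isNonsingular_smul hc h)
    rw [← hNS, hNSval, hq1'] at hkey
    have htar : (q ^ 3 - q) * (2 * k) = 16 * k ^ 4 + 24 * k ^ 3 + 8 * k ^ 2 := by
      have e3 : q ^ 3 = 8 * k ^ 3 + 12 * k ^ 2 + 6 * k + 1 := by rw [hk]; ring
      have e4 : q ^ 3 - q = 8 * k ^ 3 + 12 * k ^ 2 + 4 * k := by omega
      rw [e4]
      ring
    exact Nat.eq_of_mul_eq_mul_right (by omega : 0 < 2 * k) (hkey.trans htar.symm)
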